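/- An element z of the degree-2 part H² of S_n is primitive and satisfies z² = 0 in S_n if and only if z ∈ {x_1, −x_1} ∪ {2x_j − x_1, −(2x_j − x_1) : 2 ≤ j ≤ n}. Moreover, the image of each of these elements under the reduction map S_n → S_n ⊗ ℤ/2 equals the image of x_1. -/

import Mathlib

/-!
Context: for n ≥ 1, S_n := ℤ[x_1,…,x_n]/(x_1², x_j² − x_1 x_j : j = 2,…,n) is
the integral cohomology ring of the n-stage Bott manifold 𝓗_n.  The degree-2
part H² of S_n is the free abelian group with basis x_1,…,x_n, and an element
of H² is primitive if the gcd of its coordinates is 1.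

STATEMENT 6: An element z of H² is primitive and satisfies z² = 0 in S_n if
and only if z ∈ {x_1, −x_1} ∪ {2x_j − x_1, −(2x_j − x_1) : 2 ≤ j ≤ n}.
Moreover, the image of each of these elements under the reduction map
S_n → S_n ⊗ ℤ/2 equals the image of x_1.
-/

open MvPolynomial

noncomputable section

/-- The defining relations x_1², x_j² − x_1 x_j (j ≥ 2) of S_n. -/
def srel (n : ℕ) (j : Fin n) : MvPolynomial (Fin n) ℤ :=
  X j ^ 2 -
    (if j.val = 0 then 0
      else X (⟨0, Nat.lt_of_le_of_lt (Nat.zero_le _) j.isLt⟩ : Fin n)) * X j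

/-- S_n = ℤ[x_1,…,x_n]/(x_1², x_j² − x_1 x_j : j = 2,…,n). -/
abbrev SRing (n : ℕ) : Type :=
  MvPolynomial (Fin n) ℤ ⧸ Ideal.span (Set.range (srel n))

/-- The image x_i of X i in S_n. -/
def sx (n : ℕ) (i : Fin n) : SRing n :=
  Ideal.Quotient.mk _ (X i)

/-- The reduction map S_n → S_n ⊗ ℤ/2 = S_n/2S_n. -/
def mod2 (n : ℕ) : SRing n →+* SRing n ⧸ (Ideal.span ({2} : Set (SRing n))) :=
  Ideal.Quotient.mk _

-- auxiliary lemmas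
set_option maxHeartbeats 1000000
set_option synthInstance.maxHeartbeats 1000000

-- ## The detector ring
abbrev A2 := DualNumber (DualNumber ℤ)
def uu : A2 := TrivSqZeroExt.inl DualNumber.eps
def vv : A2 := DualNumber.eps

attribute [local simp] TrivSqZeroExt.fst_mul TrivSqZeroExt.snd_mul

lemma elem_mul (a b c d : ℤ) :
    (a • uu + b • vv) * (c • uu + d • vv) = (a * d + b * c) • (uu * vv) := by
  ext <;> simp [uu, vv, DualNumber.fst_eps, DualNumber.snd_eps]
lemma elem_sq (a b : ℤ) : (a • uu + b • vv) ^ 2 = (2 * (a * b)) • (uu * vv) := by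
  rw [sq, elem_mul]; ring_nf

set_option synthInstance.maxHeartbeats 1000000 in
lemma hdetect (k : ℤ) (h : k • (uu * vv) = 0) : k = 0 := by
  have := congrArg (fun x : A2 => x.snd.snd) h
  simpa [uu, vv, DualNumber.fst_eps, DualNumber.snd_eps] using this

lemma fin_mk_zero (n : ℕ) [NeZero n] (h : 0 < n) : (⟨0, h⟩ : Fin n) = 0 := by
  ext; simp [Fin.val_zero]

lemma srel_zero (n : ℕ) [NeZero n] : srel n 0 = X 0 ^ 2 := by
  simp [srel, Fin.val_zero]

lemma srel_ne (n : ℕ) [NeZero n] (j : Fin n) (hj : j ≠ 0) :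
    srel n j = X j ^ 2 - X 0 * X j := by
  have : j.val ≠ 0 := fun h => hj (Fin.ext (by simp [h, Fin.val_zero]))
  rw [srel, if_neg this, fin_mk_zero]

-- ## The detecting homomorphism
lemma dot_mul_eq_zero (n : ℕ) [NeZero n] (g h : Fin n → ℤ)
    (h00 : g 0 * h 0 = 0)
    (hrel : ∀ j : Fin n, j ≠ 0 → 2 * (g j * h j) = g 0 * h j + h 0 * g j)
    (c : Fin n → ℤ) (hz2 : (∑ i, c i • sx n i) ^ 2 = 0) :
    (∑ i, c i * g i) * (∑ i, c i * h i) = 0 := by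
  set f : Fin n → A2 := fun i => g i • uu + h i • vv with hf
  have hrelz : ∀ j : Fin n, (aeval f) (srel n j) = 0 := by
    intro j
    by_cases hj : j = 0
    · subst hj
      rw [srel_zero, map_pow, aeval_X, hf]
      simp only [elem_sq, h00, mul_zero, zero_smul]
    · rw [srel_ne n j hj, map_sub, map_pow, map_mul, aeval_X, aeval_X, hf]
      simp only [elem_sq, elem_mul]
      rw [hrel j hj, sub_self]
  have hker : ∀ p ∈ Ideal.span (Set.range (srel n)), (aeval f).toRingHom p = 0 := by
    intro p hp
    have hle : Ideal.span (Set.range (srel n)) ≤ RingHom.ker (aeval f).toRingHom := by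
      rw [Ideal.span_le]
      rintro q ⟨j, rfl⟩
      simpa [RingHom.mem_ker] using hrelz j
    exact RingHom.mem_ker.mp (hle hp)
  set ψ : SRing n →+* A2 := Ideal.Quotient.lift _ (aeval f).toRingHom hker with hψ
  have hsx : ∀ i, ψ (sx n i) = f i := by
    intro i
    simp [hψ, sx, Ideal.Quotient.lift_mk]
  have hz : ψ (∑ i, c i • sx n i) = (∑ i, c i * g i) • uu + (∑ i, c i * h i) • vv := by
    rw [map_sum]
    have : ∀ i : Fin n, ψ (c i • sx n i) = (c i * g i) • uu + (c i * h i) • vv := by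
      intro i
      rw [map_zsmul, hsx, hf, smul_add, smul_smul, smul_smul]
    rw [Finset.sum_congr rfl fun i _ => this i, Finset.sum_add_distrib,
      ← Finset.sum_smul, ← Finset.sum_smul]
  have h2 : ψ ((∑ i, c i • sx n i) ^ 2) = 0 := by rw [hz2, map_zero]
  rw [map_pow, hz, elem_sq] at h2
  have := hdetect _ h2
  omega

-- specialized detectors
lemma detA (n : ℕ) [NeZero n] (j : Fin n) (hj : j ≠ 0)
    (c : Fin n → ℤ) (hz2 : (∑ i, c i • sx n i) ^ 2 = 0) :
    (2 * c 0 + c j) * c j = 0 := by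
  have := dot_mul_eq_zero n
    (fun i => (if i = 0 then 2 else 0) + (if i = j then 1 else 0))
    (fun i => if i = j then 1 else 0)
    (by simp [hj.symm, Ne.symm hj]) ?_ c hz2
  · simpa [mul_add, Finset.sum_add_distrib, mul_ite, Finset.sum_ite_eq',
      mul_comm, mul_assoc, two_mul] using this
  · intro j' hj'
    by_cases h : j' = j
    · subst h; simp [hj', Ne.symm hj']
    · simp [h, hj', Ne.symm hj]
lemma detB (n : ℕ) [NeZero n] (i0 j0 : Fin n) (hi : i0 ≠ 0) (hj : j0 ≠ 0) (hij : i0 ≠ j0)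
    (c : Fin n → ℤ) (hz2 : (∑ i, c i • sx n i) ^ 2 = 0) :
    c i0 * c j0 = 0 := by
  have := dot_mul_eq_zero n
    (fun i => if i = i0 then 1 else 0)
    (fun i => if i = j0 then 1 else 0)
    (by simp [Ne.symm hi, Ne.symm hj]) ?_ c hz2
  · simpa [mul_ite, Finset.sum_ite_eq'] using this
  · intro j' hj'
    by_cases h1 : j' = i0 <;> by_cases h2 : j' = j0 <;>
      simp_all [Ne.symm hi, Ne.symm hj]

-- gcd helpers
lemma gcd_unit {n : ℕ} [NeZero n] (c : Fin n → ℤ) (hg : Finset.univ.gcd c = 1)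
    (hd : ∀ i, c 0 ∣ c i) : c 0 = 1 ∨ c 0 = -1 := by
  have h1 : c 0 ∣ 1 := by
    rw [← hg]
    exact Finset.dvd_gcd fun i _ => hd i
  exact Int.isUnit_iff.mp (isUnit_of_dvd_one h1)

lemma gcd_ind {n : ℕ} [NeZero n] (c : Fin n → ℤ) (i : Fin n) (hi : c i = 1 ∨ c i = -1) :
    Finset.univ.gcd c = 1 := by
  have h1 : Finset.univ.gcd c ∣ 1 := by
    have hd := Finset.gcd_dvd (f := c) (Finset.mem_univ i)
    rcases hi with h | h <;> rw [h] at hd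
    · exact hd
    · exact dvd_neg.mp hd
  rcases Int.isUnit_iff.mp (isUnit_of_dvd_one h1) with h | h
  · exact h
  · exfalso
    have hn := Finset.normalize_gcd (f := c) (s := (Finset.univ : Finset (Fin n)))
    rw [h] at hn
    rw [Int.normalize_of_nonpos (by norm_num)] at hn
    norm_num at hn

-- squares vanish
lemma sq_sx0 (n : ℕ) [NeZero n] : sx n 0 ^ 2 = 0 := by
  rw [sx, ← map_pow, Ideal.Quotient.eq_zero_iff_mem, ← srel_zero]
  exact Ideal.subset_span ⟨0, rfl⟩

lemma sq_elem (n : ℕ) [NeZero n] (j : Fin n) (hj : j ≠ 0) :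
    ((2 : ℤ) • sx n j - sx n 0) ^ 2 = 0 := by
  have : (2 : ℤ) • sx n j - sx n 0 =
      Ideal.Quotient.mk _ ((2 : ℤ) • X j - X 0) := by
    rw [sx, sx, map_sub, map_zsmul]
  rw [this, ← map_pow, Ideal.Quotient.eq_zero_iff_mem]
  have key : ((2 : ℤ) • X j - X 0 : MvPolynomial (Fin n) ℤ) ^ 2 =
      4 * srel n j + srel n 0 := by
    rw [srel_zero, srel_ne n j hj, zsmul_eq_mul]
    push_cast
    ring
  rw [key]
  exact Ideal.add_mem _ (Ideal.mul_mem_left _ _ (Ideal.subset_span ⟨j, rfl⟩))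
    (Ideal.subset_span ⟨0, rfl⟩)

lemma nsmul_eq_zsmul (n : ℕ) (j : Fin n) : (2 : ℕ) • sx n j = (2 : ℤ) • sx n j := by
  simp

theorem square_zero_primitive_in_Hn (n : ℕ) [NeZero n] :
    (∀ z : SRing n,
      ((∃ c : Fin n → ℤ, Finset.univ.gcd c = 1 ∧ z = ∑ i, c i • sx n i) ∧ z ^ 2 = 0) ↔
        (z = sx n 0 ∨ z = -sx n 0 ∨
          ∃ j : Fin n, j ≠ 0 ∧ (z = 2 • sx n j - sx n 0 ∨ z = -(2 • sx n j - sx n 0)))) ∧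
    (∀ z : SRing n,
      (z = sx n 0 ∨ z = -sx n 0 ∨
          ∃ j : Fin n, j ≠ 0 ∧ (z = 2 • sx n j - sx n 0 ∨ z = -(2 • sx n j - sx n 0))) →
        mod2 n z = mod2 n (sx n 0)) := by
  constructor
  · intro z
    constructor
    · rintro ⟨⟨c, hg, rfl⟩, hz2⟩
      by_cases hA : ∀ j : Fin n, j ≠ 0 → c j = 0
      · -- z = c 0 • sx 0
        have hzz : ∑ i, c i • sx n i = c 0 • sx n 0 :=
          Finset.sum_eq_single 0 (fun b _ hb => by rw [hA b hb, zero_smul])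
            (fun h => absurd (Finset.mem_univ _) h)
        have hc0 : c 0 = 1 ∨ c 0 = -1 := by
          refine gcd_unit c hg fun i => ?_
          by_cases hi : i = 0
          · rw [hi]
          · rw [hA i hi]; exact dvd_zero _
        rcases hc0 with h | h
        · left; rw [hzz, h, one_smul]
        · right; left; rw [hzz, h, neg_smul, one_smul]
      · push_neg at hA
        obtain ⟨j, hj0, hcj⟩ := hA
        have hother : ∀ i : Fin n, i ≠ 0 → i ≠ j → c i = 0 := by
          intro i hi0 hij
          have := detB n i j hi0 hj0 hij c hz2
          rcases mul_eq_zero.mp this with h | h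
          · exact h
          · exact absurd h hcj
        have hcjval : c j = -(2 * c 0) := by
          have := detA n j hj0 c hz2
          rcases mul_eq_zero.mp this with h | h
          · linarith
          · exact absurd h hcj
        have hzz : ∑ i, c i • sx n i = c 0 • sx n 0 + c j • sx n j := by
          rw [← Finset.add_sum_erase _ _ (Finset.mem_univ 0)]
          congr 1
          refine Finset.sum_eq_single_of_mem j
            (Finset.mem_erase.mpr ⟨hj0, Finset.mem_univ _⟩) ?_
          intro b hb hbj
          rw [hother b (Finset.mem_erase.mp hb).1 hbj, zero_smul]
        have hc0 : c 0 = 1 ∨ c 0 = -1 := by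
          refine gcd_unit c hg fun i => ?_
          by_cases hi : i = 0
          · rw [hi]
          · by_cases hij : i = j
            · rw [hij, hcjval]; exact dvd_neg.mpr (dvd_mul_left _ _)
            · rw [hother i hi hij]; exact dvd_zero _
        right; right
        refine ⟨j, hj0, ?_⟩
        rcases hc0 with h | h
        · right
          rw [hzz, h, hcjval, h, nsmul_eq_zsmul]
          push_cast
          module
        · left
          rw [hzz, h, hcjval, h, nsmul_eq_zsmul]
          push_cast
          module
    · rintro (rfl | rfl | ⟨j, hj, (rfl | rfl)⟩)
      · refine ⟨⟨fun i => if i = 0 then (1:ℤ) else 0, ?_, ?_⟩, sq_sx0 n⟩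
        · exact gcd_ind _ 0 (by simp)
        · simp [ite_smul, Finset.sum_ite_eq']
      · refine ⟨⟨fun i => if i = 0 then (-1:ℤ) else 0, ?_, ?_⟩, by
          linear_combination sq_sx0 n⟩
        · exact gcd_ind _ 0 (by simp)
        · simp [ite_smul, Finset.sum_ite_eq']
      · refine ⟨⟨fun i => (if i = j then (2:ℤ) else 0) + (if i = 0 then -1 else 0), ?_, ?_⟩, ?_⟩
        · exact gcd_ind _ 0 (by simp [Ne.symm hj])
        · rw [nsmul_eq_zsmul]
          simp [add_smul, ite_smul, Finset.sum_add_distrib, Finset.sum_ite_eq']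
          module
        · rw [nsmul_eq_zsmul]
          exact sq_elem n j hj
      · refine ⟨⟨fun i => (if i = j then (-2:ℤ) else 0) + (if i = 0 then 1 else 0), ?_, ?_⟩, ?_⟩
        · exact gcd_ind _ 0 (by simp [Ne.symm hj])
        · rw [nsmul_eq_zsmul]
          simp [add_smul, ite_smul, Finset.sum_add_distrib, Finset.sum_ite_eq']
          module
        · rw [nsmul_eq_zsmul]
          linear_combination sq_elem n j hj
  · intro z hz
    have key : ∀ w : SRing n, (2 : SRing n) ∣ (w - sx n 0) → mod2 n w = mod2 n (sx n 0) := by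
      intro w hw
      rw [mod2, Ideal.Quotient.eq]
      exact (Ideal.mem_span_singleton).mpr hw
    rcases hz with rfl | rfl | ⟨j, hj, (rfl | rfl)⟩
    · rfl
    · exact key _ ⟨-sx n 0, by ring⟩
    · exact key _ ⟨sx n j - sx n 0, by rw [nsmul_eq_zsmul, zsmul_eq_mul]; push_cast; ring⟩
    · exact key _ ⟨-sx n j, by rw [nsmul_eq_zsmul, zsmul_eq_mul]; push_cast; ring⟩

end
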